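/- A non-autonomous dynamical system (X, f_{1,∞}) is weakly mixing of all orders if and only if the induced non-autonomous system on the space of Borel probability measures M(X) is weakly mixing of all orders. -/

import Mathlib

open Set Filter MeasureTheory TopologicalSpace

/-- `iterN f n = f_{n-1} ∘ ⋯ ∘ f_0`, the `n`-th iterate of the non-autonomous system. -/
def iterN {X : Type*} (f : ℕ → X → X) : ℕ → X → X
  | 0 => id
  | n + 1 => f n ∘ iterN f n

/-- Topological transitivity of a non-autonomous system. -/
def NATransitive {X : Type*} [TopologicalSpace X] (f : ℕ → X → X) : Prop :=
  ∀ U V : Set X, IsOpen U → IsOpen V → U.Nonempty → V.Nonempty →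
    ∃ n : ℕ, 0 < n ∧ (iterN f n '' U ∩ V).Nonempty

/-- Weak mixing (order 2). -/
def NAWeaklyMixing {X : Type*} [TopologicalSpace X] (f : ℕ → X → X) : Prop :=
  ∀ U₁ U₂ V₁ V₂ : Set X, IsOpen U₁ → IsOpen U₂ → IsOpen V₁ → IsOpen V₂ →
    U₁.Nonempty → U₂.Nonempty → V₁.Nonempty → V₂.Nonempty →
    ∃ n : ℕ, 0 < n ∧ (iterN f n '' U₁ ∩ V₁).Nonempty ∧ (iterN f n '' U₂ ∩ V₂).Nonempty

/-- Weak mixing of order `m`. -/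
def NAWeaklyMixingOrder {X : Type*} [TopologicalSpace X] (f : ℕ → X → X) (m : ℕ) : Prop :=
  ∀ U V : Fin m → Set X, (∀ i, IsOpen (U i)) → (∀ i, IsOpen (V i)) →
    (∀ i, (U i).Nonempty) → (∀ i, (V i).Nonempty) →
    ∃ n : ℕ, 0 < n ∧ ∀ i, (iterN f n '' U i ∩ V i).Nonempty

/-- Banks's condition. -/
def NABanks {X : Type*} [TopologicalSpace X] (f : ℕ → X → X) : Prop :=
  ∀ U V W : Set X, IsOpen U → IsOpen V → IsOpen W →
    U.Nonempty → V.Nonempty → W.Nonempty →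
    ∃ n : ℕ, 0 < n ∧ (iterN f n '' U ∩ V).Nonempty ∧ (iterN f n '' U ∩ W).Nonempty

/-- Topological mixing. -/
def NAMixing {X : Type*} [TopologicalSpace X] (f : ℕ → X → X) : Prop :=
  ∀ U V : Set X, IsOpen U → IsOpen V → U.Nonempty → V.Nonempty →
    ∃ N : ℕ, ∀ n ≥ N, (iterN f n '' U ∩ V).Nonempty

/-- `blockC f s k = f_{s+k-1} ∘ ⋯ ∘ f_s`. -/
def blockC {X : Type*} (f : ℕ → X → X) (s k : ℕ) : X → X :=
  iterN (fun i => f (s + i)) k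

/-- The `k`-th iterate system `f_{1,∞}^{[k]}`. -/
def kthSys {X : Type*} (f : ℕ → X → X) (k : ℕ) : ℕ → X → X :=
  fun n => blockC f (n * k) k

/-- The induced non-autonomous system on Borel probability measures (pushforwards). -/
noncomputable def inducedM {X : Type*} [MeasurableSpace X] [TopologicalSpace X]
    [BorelSpace X] (f : ℕ → X → X) (hf : ∀ n, Continuous (f n)) :
    ℕ → ProbabilityMeasure X → ProbabilityMeasure X :=
  fun n μ => μ.map ((hf n).measurable.aemeasurable)

/-- The induced non-autonomous system on the hyperspace of non-empty compact subsets. -/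
def inducedK {X : Type*} [TopologicalSpace X] (f : ℕ → X → X) (hf : ∀ n, Continuous (f n)) :
    ℕ → NonemptyCompacts X → NonemptyCompacts X :=
  fun n K => ⟨⟨f n '' (K : Set X), K.isCompact.image (hf n)⟩, K.nonempty.image _⟩

/-- The set `N(U, δ)` of sensitivity times. -/
def NSet {X : Type*} [PseudoMetricSpace X] (f : ℕ → X → X) (U : Set X) (δ : ℝ) : Set ℕ :=
  {n | 0 < n ∧ ∃ x ∈ U, ∃ y ∈ U, δ < dist (iterN f n x) (iterN f n y)}

/-- Sensitive dependence on initial conditions. -/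
def NASensitive {X : Type*} [PseudoMetricSpace X] (f : ℕ → X → X) : Prop :=
  ∃ δ : ℝ, 0 < δ ∧ ∀ x : X, ∀ U : Set X, IsOpen U → x ∈ U →
    ∃ y ∈ U, ∃ n : ℕ, 0 < n ∧ δ < dist (iterN f n x) (iterN f n y)

/-- A thick subset of ℕ. -/
def ThickSet (S : Set ℕ) : Prop := ∀ p : ℕ, ∃ n : ℕ, ∀ j ≤ p, n + j ∈ S

/-- A syndetic subset of ℕ. -/
def SyndeticSet (S : Set ℕ) : Prop := ∃ a : ℕ, ∀ i : ℕ, ∃ j, i ≤ j ∧ j ≤ i + a ∧ j ∈ S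

/-- Upper density of a subset of ℕ. -/
noncomputable def upperDens (S : Set ℕ) : ℝ :=
  Filter.limsup (fun n : ℕ => (Nat.card ↥(S ∩ Set.Iio n) : ℝ) / n) Filter.atTop

/-- Periodic point of a non-autonomous system. -/
def NAPeriodicPt {X : Type*} (f : ℕ → X → X) (x : X) : Prop :=
  ∃ n : ℕ, 0 < n ∧ ∀ k : ℕ, 0 < k → iterN f (n * k) x = x


open Metric
open scoped ENNReal NNReal

noncomputable def unifM {Y : Type*} [MeasurableSpace Y] (r : ℕ) (z : Fin r → Y) : Measure Y :=
  (r : ℝ≥0∞)⁻¹ • ∑ j, Measure.dirac (z j)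

lemma unifM_apply {Y : Type*} [MeasurableSpace Y] (r : ℕ) (z : Fin r → Y) {s : Set Y}
    (hs : MeasurableSet s) :
    unifM r z s = (r : ℝ≥0∞)⁻¹ * ∑ j, s.indicator 1 (z j) := by
  simp [unifM, Measure.smul_apply, Measure.finset_sum_apply, Measure.dirac_apply' _ hs,
    smul_eq_mul]

lemma unifM_prob {Y : Type*} [MeasurableSpace Y] {r : ℕ} (hr : 0 < r) (z : Fin r → Y) :
    IsProbabilityMeasure (unifM r z) := by
  constructor
  rw [unifM_apply r z MeasurableSet.univ]
  simp only [Set.indicator_univ, Pi.one_apply, Finset.sum_const, Finset.card_univ,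
    Fintype.card_fin, nsmul_eq_mul, mul_one]
  · exact ENNReal.inv_mul_cancel (by exact_mod_cast hr.ne') (by simp)

lemma unifM_map {Y Z : Type*} [MeasurableSpace Y] [MeasurableSpace Z] (r : ℕ) (z : Fin r → Y)
    {g : Y → Z} (hg : Measurable g) : (unifM r z).map g = unifM r (g ∘ z) := by
  ext s hs
  rw [Measure.map_apply hg hs, unifM_apply r z (hg hs), unifM_apply r (g ∘ z) hs]
  congr 1

lemma exists_tuple_counts {Y : Type*} :
    ∀ (N : ℕ) (k : Fin N → ℕ) (c : Fin N → Y),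
      ∃ z : Fin (∑ j, k j) → Y, ∀ g : Y → ℝ≥0∞,
        ∑ t, g (z t) = ∑ j, (k j : ℝ≥0∞) * g (c j) := by
  intro N
  induction N with
  | zero =>
    intro k c
    haveI : IsEmpty (Fin (∑ j : Fin 0, k j)) := by
      rw [show (∑ j : Fin 0, k j) = 0 by simp]; infer_instance
    exact ⟨isEmptyElim, fun g => by simp⟩
  | succ N ih =>
    intro k c
    obtain ⟨z', hz'⟩ := ih (k ∘ Fin.succ) (c ∘ Fin.succ)
    simp only [Function.comp] at hz'
    have hsum : (∑ j, k j) = k 0 + ∑ j : Fin N, k (Fin.succ j) := Fin.sum_univ_succ k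
    rw [hsum]
    refine ⟨Fin.append (fun _ : Fin (k 0) => c 0) z', fun g => ?_⟩
    rw [Fin.sum_univ_add]
    simp only [Fin.append_left, Fin.append_right]
    rw [Fin.sum_univ_succ (fun j => (k j : ℝ≥0∞) * g (c j))]
    rw [Finset.sum_const, Finset.card_univ, Fintype.card_fin, nsmul_eq_mul, hz' g]

lemma exists_tuple_counts' {Y : Type*} (r N : ℕ) (k : Fin N → ℕ) (c : Fin N → Y)
    (h : ∑ j, k j = r) : ∃ z : Fin r → Y, ∀ g : Y → ℝ≥0∞,
      ∑ t, g (z t) = ∑ j, (k j : ℝ≥0∞) * g (c j) := by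
  subst h; exact exists_tuple_counts N k c

section LP
variable {X : Type*} [MetricSpace X] [CompactSpace X] [MeasurableSpace X] [BorelSpace X]

/-- atoms-move bound for LP distance between uniform measures -/
lemma unif_LPdist_le {r : ℕ} (hr : 0 < r) (z w : Fin r → X) {δ : ℝ} (hδ : 0 ≤ δ)
    (h : ∀ j, dist (w j) (z j) ≤ δ) :
    levyProkhorovDist (unifM r z) (unifM r w) ≤ δ := by
  haveI := unifM_prob hr z
  haveI := unifM_prob hr w
  apply levyProkhorovDist_le_of_forall_le _ _ hδ
  intro ε B hε hB
  rw [unifM_apply r z hB, unifM_apply r w (isOpen_thickening.measurableSet)]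
  refine le_trans ?_ le_self_add
  refine mul_le_mul_right (Finset.sum_le_sum fun j _ => ?_) _
  by_cases hj : z j ∈ B
  · have : w j ∈ Metric.thickening ε B := by
      rw [Metric.mem_thickening_iff]
      exact ⟨z j, hj, lt_of_le_of_lt (h j) hε⟩
    simp [Set.indicator_apply, hj, this]
  · simp [Set.indicator_apply, hj]

/-- open sets in the weak topology are LP-metric open -/
lemma exists_LP_ball {S : Set (ProbabilityMeasure X)} (hS : IsOpen S)
    {μ : ProbabilityMeasure X} (hμ : μ ∈ S) :
    ∃ ε : ℝ, 0 < ε ∧ ∀ ν : ProbabilityMeasure X,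
      levyProkhorovDist ν.toMeasure μ.toMeasure < ε → ν ∈ S := by
  set H := LevyProkhorov.probabilityMeasureHomeomorph (Ω := X)
  have hS' : IsOpen (H.symm ⁻¹' S) := hS.preimage H.symm.continuous
  obtain ⟨ε, hε, hball⟩ := Metric.isOpen_iff.mp hS' (H μ)
    (by show H.symm (H μ) ∈ S; rw [Homeomorph.symm_apply_apply]; exact hμ)
  refine ⟨ε, hε, fun ν hν => ?_⟩
  have : H ν ∈ H.symm ⁻¹' S := hball (show dist (H ν) (H μ) < ε from hν)
  rwa [Set.mem_preimage, Homeomorph.symm_apply_apply] at this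
end LP


section Dyn
variable {X : Type*} [MetricSpace X] [CompactSpace X] [MeasurableSpace X] [BorelSpace X]
  (f : ℕ → X → X) (hf : ∀ n, Continuous (f n))
include hf

lemma iterN_continuous (n : ℕ) : Continuous (iterN f n) := by
  induction n with
  | zero => exact continuous_id
  | succ n ih => exact (hf n).comp ih

lemma iterN_inducedM (n : ℕ) (μ : ProbabilityMeasure X) :
    (iterN (inducedM f hf) n μ).toMeasure = μ.toMeasure.map (iterN f n) := by
  induction n with
  | zero => rw [show iterN (inducedM f hf) 0 μ = μ from rfl, show iterN f 0 = id from rfl, Measure.map_id]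
  | succ n ih =>
    show ((inducedM f hf n) (iterN (inducedM f hf) n μ)).toMeasure = _
    rw [inducedM, ProbabilityMeasure.toMeasure_map, ih,
      Measure.map_map (hf n).measurable (iterN_continuous f hf n).measurable]
    rfl

omit hf

lemma isOpen_half (G : Set X) (hG : IsOpen G) :
    IsOpen {μ : ProbabilityMeasure X | (1/2 : ℝ≥0∞) < μ.toMeasure G} := by
  rw [isOpen_iff_mem_nhds]
  intro μ hμ
  have hε : (0:ℝ≥0∞) < μ.toMeasure G - 1/2 := tsub_pos_iff_lt.mpr hμ
  filter_upwards [μ.toMeasure_add_pos_gt_mem_nhds hG hε] with Q hQ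
  show (1/2 : ℝ≥0∞) < Q.toMeasure G
  by_contra hc
  push_neg at hc
  have : μ.toMeasure G < μ.toMeasure G := by
    calc μ.toMeasure G < Q.toMeasure G + (μ.toMeasure G - 1/2) := hQ
    _ ≤ 1/2 + (μ.toMeasure G - 1/2) := add_le_add_left hc _
    _ = μ.toMeasure G := add_tsub_cancel_of_le hμ.le
  exact absurd this (lt_irrefl _)

include hf

lemma backward_dir (m : ℕ)
    (hind : NAWeaklyMixingOrder (inducedM f hf) m) : NAWeaklyMixingOrder f m := by
  intro U V hUo hVo hUne hVne
  set UU : Fin m → Set (ProbabilityMeasure X) :=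
    fun i => {μ | (1/2 : ℝ≥0∞) < μ.toMeasure (U i)} with hUU
  set VV : Fin m → Set (ProbabilityMeasure X) :=
    fun i => {μ | (1/2 : ℝ≥0∞) < μ.toMeasure (V i)} with hVV
  have hdirac : ∀ (s : Set X) (x : X), x ∈ s → IsOpen s →
      (⟨Measure.dirac x, inferInstance⟩ : ProbabilityMeasure X) ∈
        {μ : ProbabilityMeasure X | (1/2 : ℝ≥0∞) < μ.toMeasure s} := by
    intro s x hx hs
    show (1/2 : ℝ≥0∞) < Measure.dirac x s
    rw [Measure.dirac_apply' _ hs.measurableSet, Set.indicator_of_mem hx]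
    simp only [Pi.one_apply]
    exact ENNReal.half_lt_self (by simp) (by simp)
  obtain ⟨n, hn, hmix⟩ := hind UU VV
    (fun i => isOpen_half _ (hUo i)) (fun i => isOpen_half _ (hVo i))
    (fun i => ⟨_, hdirac _ (hUne i).choose (hUne i).choose_spec (hUo i)⟩)
    (fun i => ⟨_, hdirac _ (hVne i).choose (hVne i).choose_spec (hVo i)⟩)
  refine ⟨n, hn, fun i => ?_⟩
  obtain ⟨ν, ⟨μ, hμU, hmap⟩, hνV⟩ := hmix i
  rw [← hmap] at hνV
  have hmeas := (iterN_continuous f hf n).measurable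
  have key : (1/2 : ℝ≥0∞) < μ.toMeasure ((iterN f n) ⁻¹' (V i)) := by
    have h2 := hνV
    simp only [hVV, Set.mem_setOf_eq] at h2
    rwa [iterN_inducedM f hf n μ,
      Measure.map_apply hmeas (hVo i).measurableSet] at h2
  have hμU' : (1/2 : ℝ≥0∞) < μ.toMeasure (U i) := hμU
  have hpos : μ.toMeasure (U i ∩ (iterN f n) ⁻¹' (V i)) ≠ 0 := by
    intro h0
    have hui := measure_union_add_inter (μ := μ.toMeasure) (U i) (hmeas (hVo i).measurableSet)
    rw [h0, add_zero] at hui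
    have hle : μ.toMeasure (U i ∪ (iterN f n) ⁻¹' (V i)) ≤ 1 := prob_le_one
    have hcon : (1:ℝ≥0∞) < 1 := by
      calc (1:ℝ≥0∞) = 1/2 + 1/2 := by rw [ENNReal.add_halves]
      _ < μ.toMeasure (U i) + μ.toMeasure ((iterN f n) ⁻¹' (V i)) :=
          ENNReal.add_lt_add hμU' key
      _ = μ.toMeasure (U i ∪ (iterN f n) ⁻¹' (V i)) := hui.symm
      _ ≤ 1 := hle
    exact absurd hcon (lt_irrefl _)
  obtain ⟨x, hxU, hxV⟩ := nonempty_of_measure_ne_zero hpos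
  exact ⟨iterN f n x, ⟨x, hxU, rfl⟩, hxV⟩

end Dyn


section Density
variable {X : Type*} [MetricSpace X] [CompactSpace X] [MeasurableSpace X] [BorelSpace X]

lemma dense_unif (μ : Measure X) [IsProbabilityMeasure μ] {ε : ℝ} (hε : 0 < ε) :
    ∃ r : ℕ, 0 < r ∧ ∃ z : Fin r → X, levyProkhorovDist (unifM r z) μ < ε := by
  haveI hXne : Nonempty X := by
    rcases isEmpty_or_nonempty X with h | h
    · exfalso
      have h1 : μ Set.univ = 1 := measure_univ
      rw [Set.univ_eq_empty_iff.mpr h, measure_empty] at h1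
      exact zero_ne_one h1
    · exact h
  set δ := ε/3 with hδdef
  have hδ : 0 < δ := by positivity
  -- finite cover by δ-balls
  obtain ⟨t, -, tfin, tcov⟩ := finite_cover_balls_of_compact (isCompact_univ (X := X)) hδ
  set s' := tfin.toFinset with hs'
  set N := s'.card with hNdef
  set c : Fin N → X := fun j => (s'.equivFin.symm j : X) with hc
  have hcov : ∀ x : X, ∃ j : Fin N, dist x (c j) < δ := by
    intro x
    have hx := tcov (Set.mem_univ x)
    simp only [Set.mem_iUnion] at hx
    obtain ⟨y, hy, hxy⟩ := hx
    have hy' : y ∈ s' := tfin.mem_toFinset.mpr hy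
    refine ⟨s'.equivFin ⟨y, hy'⟩, ?_⟩
    have : c (s'.equivFin ⟨y, hy'⟩) = y := by
      rw [hc]; simp
    rw [this]
    exact Metric.mem_ball.mp hxy
  have hN : 0 < N := by
    obtain ⟨j, -⟩ := hcov (Classical.arbitrary X)
    exact Fin.pos j
  -- disjointify
  set Bs : ℕ → Set X := fun n => if h : n < N then Metric.ball (c ⟨n, h⟩) δ else ∅ with hBs
  set D := disjointed Bs with hD
  set cc : ℕ → X := fun n => if h : n < N then c ⟨n, h⟩ else Classical.arbitrary X with hcc
  have hBsmeas : ∀ n, MeasurableSet (Bs n) := by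
    intro n
    simp only [hBs]
    rcases Nat.lt_or_ge n N with h | h
    · rw [dif_pos h]; exact measurableSet_ball
    · rw [dif_neg (Nat.not_lt.mpr h)]; exact MeasurableSet.empty
  have hDmeas : ∀ n, MeasurableSet (D n) := MeasurableSet.disjointed hBsmeas
  have hDdisj : Pairwise (Function.onFun Disjoint D) := disjoint_disjointed Bs
  have hDsub : ∀ n, n < N → D n ⊆ Metric.ball (cc n) δ := by
    intro n hn
    refine (disjointed_subset Bs n).trans ?_
    simp only [hBs, hcc, dif_pos hn]
    exact subset_rfl
  have hDempty : ∀ n, N ≤ n → D n = ∅ := by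
    intro n hn
    have : Bs n = ∅ := by rw [hBs]; simp [Nat.not_lt.mpr hn]
    exact Set.eq_empty_of_subset_empty (this ▸ disjointed_subset Bs n)
  have hDcover : ⋃ n ∈ Finset.range N, D n = Set.univ := by
    apply Set.eq_univ_of_forall
    intro x
    have hx : x ∈ ⋃ n, D n := by
      rw [hD, iUnion_disjointed]
      obtain ⟨j, hj⟩ := hcov x
      apply Set.mem_iUnion.mpr ⟨(j : ℕ), ?_⟩
      rw [hBs]
      simp only [j.isLt, dif_pos, Fin.eta]
      exact Metric.mem_ball.mpr hj
    obtain ⟨n, hn⟩ := Set.mem_iUnion.mp hx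
    have hnN : n < N := by
      by_contra hcon
      rw [hDempty n (Nat.not_lt.mp hcon)] at hn
      exact hn
    exact Set.mem_biUnion (Finset.mem_range.mpr hnN) hn
  have hpd : (↑(Finset.range N) : Set ℕ).PairwiseDisjoint D :=
    fun a _ b _ hab => hDdisj hab
  have hwsum : ∑ n ∈ Finset.range N, μ (D n) = 1 := by
    rw [← measure_biUnion_finset hpd (fun n _ => hDmeas n), hDcover, measure_univ]
  -- choice of r
  set r : ℕ := ⌈(N : ℝ)/δ⌉₊ + 1 with hrdef
  have hr : 0 < r := Nat.succ_pos _
  have hrR : (0:ℝ) < r := by exact_mod_cast hr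
  have hNr : (N : ℝ) ≤ δ * r := by
    have h1 : (N : ℝ)/δ ≤ (⌈(N : ℝ)/δ⌉₊ : ℝ) := Nat.le_ceil _
    have h2 : ((⌈(N : ℝ)/δ⌉₊ : ℕ) : ℝ) ≤ (r : ℝ) := by
      exact_mod_cast Nat.le_succ _
    rw [div_le_iff₀ hδ] at h1
    calc (N:ℝ) ≤ (⌈(N : ℝ)/δ⌉₊ : ℝ) * δ := h1
    _ ≤ r * δ := by nlinarith [hδ.le]
    _ = δ * r := mul_comm _ _
  have hrne : ((r : ℝ≥0∞)) ≠ 0 := by exact_mod_cast hr.ne'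
  have hrtop : ((r : ℝ≥0∞)) ≠ ∞ := by simp
  have hNr' : (N : ℝ≥0∞) * (r : ℝ≥0∞)⁻¹ ≤ ENNReal.ofReal δ := by
    have h1 : (N : ℝ≥0∞) ≤ ENNReal.ofReal δ * r := by
      calc (N : ℝ≥0∞) = ENNReal.ofReal (N : ℝ) := by rw [ENNReal.ofReal_natCast]
      _ ≤ ENNReal.ofReal (δ * r) := ENNReal.ofReal_le_ofReal hNr
      _ = ENNReal.ofReal δ * ENNReal.ofReal (r:ℝ) := ENNReal.ofReal_mul hδ.le
      _ = ENNReal.ofReal δ * r := by rw [ENNReal.ofReal_natCast]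
    calc (N : ℝ≥0∞) * (r : ℝ≥0∞)⁻¹ ≤ (ENNReal.ofReal δ * r) * (r : ℝ≥0∞)⁻¹ :=
        mul_le_mul_left h1 _
    _ = ENNReal.ofReal δ * ((r : ℝ≥0∞) * (r : ℝ≥0∞)⁻¹) := by ring
    _ = ENNReal.ofReal δ := by rw [ENNReal.mul_inv_cancel hrne hrtop, mul_one]
  -- weights and counts
  set v : ℕ → ℝ := fun n => (μ (D n)).toReal with hv
  have hvnn : ∀ n, 0 ≤ v n := fun n => ENNReal.toReal_nonneg
  set k : ℕ → ℕ := fun n =>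
    ⌊v n * r⌋₊ + if n = 0 then (r - ∑ j ∈ Finset.range N, ⌊v j * r⌋₊) else 0 with hk
  have hvsum : ∑ n ∈ Finset.range N, v n = 1 := by
    rw [hv, ← ENNReal.toReal_sum (fun n _ => measure_ne_top μ _), hwsum, ENNReal.toReal_one]
  have hfloor_le : ∑ j ∈ Finset.range N, ⌊v j * r⌋₊ ≤ r := by
    have : ((∑ j ∈ Finset.range N, ⌊v j * r⌋₊ : ℕ) : ℝ) ≤ (r : ℝ) := by
      rw [Nat.cast_sum]
      calc ∑ j ∈ Finset.range N, (⌊v j * r⌋₊ : ℝ)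
          ≤ ∑ j ∈ Finset.range N, v j * r :=
            Finset.sum_le_sum fun j _ => Nat.floor_le (mul_nonneg (hvnn j) hrR.le)
      _ = (∑ j ∈ Finset.range N, v j) * r := by rw [Finset.sum_mul]
      _ = r := by rw [hvsum, one_mul]
    exact Nat.cast_le.mp this
  have hksum : ∑ n ∈ Finset.range N, k n = r := by
    rw [hk]
    rw [Finset.sum_add_distrib, Finset.sum_ite_eq' (Finset.range N) 0
      (fun _ => r - ∑ j ∈ Finset.range N, ⌊v j * r⌋₊)]
    simp only [Finset.mem_range.mpr hN, if_true]
    omega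
  have hkey : ∀ n, μ (D n) * r ≤ (k n : ℝ≥0∞) + 1 := by
    intro n
    have h1 : v n * r ≤ (k n : ℝ) + 1 := by
      have h2 : v n * r < ⌊v n * r⌋₊ + 1 := Nat.lt_floor_add_one _
      have h3 : (⌊v n * r⌋₊ : ℝ) ≤ (k n : ℝ) := by
        rw [hk]; push_cast; simp only [le_add_iff_nonneg_right]; positivity
      linarith
    calc μ (D n) * r = ENNReal.ofReal (v n) * ENNReal.ofReal (r : ℝ) := by
          rw [hv, ENNReal.ofReal_toReal (measure_ne_top μ _), ENNReal.ofReal_natCast]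
    _ = ENNReal.ofReal (v n * r) := (ENNReal.ofReal_mul (hvnn n)).symm
    _ ≤ ENNReal.ofReal ((k n : ℝ) + 1) := ENNReal.ofReal_le_ofReal h1
    _ = (k n : ℝ≥0∞) + 1 := by
        rw [ENNReal.ofReal_add (by positivity) zero_le_one, ENNReal.ofReal_natCast,
          ENNReal.ofReal_one]
  -- intermediate measure ν
  set ν : Measure X := ∑ n ∈ Finset.range N, μ (D n) • Measure.dirac (cc n) with hνdef
  have hν_apply : ∀ s : Set X, MeasurableSet s →
      ν s = ∑ n ∈ Finset.range N, μ (D n) * s.indicator 1 (cc n) := by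
    intro s hs
    rw [hνdef, Measure.finset_sum_apply]
    refine Finset.sum_congr rfl fun n _ => ?_
    rw [Measure.smul_apply, Measure.dirac_apply' _ hs, smul_eq_mul]
  haveI hν_prob : IsProbabilityMeasure ν := by
    constructor
    rw [hν_apply Set.univ MeasurableSet.univ]
    simp only [Set.indicator_univ, Pi.one_apply, mul_one]
    exact hwsum
  -- the uniform measure ρ = unifM r z
  have hsum_fin : ∑ j : Fin N, k j.val = r := by
    rw [Fin.sum_univ_eq_sum_range (fun n => k n) N]; exact hksum
  obtain ⟨z, hz⟩ := exists_tuple_counts' r N (fun j : Fin N => k j.val)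
    (fun j : Fin N => cc j.val) hsum_fin
  have hz' : ∀ g : X → ℝ≥0∞,
      ∑ t, g (z t) = ∑ n ∈ Finset.range N, (k n : ℝ≥0∞) * g (cc n) := by
    intro g
    rw [hz g, Fin.sum_univ_eq_sum_range (fun n => (k n : ℝ≥0∞) * g (cc n)) N]
  have hρ_apply : ∀ s : Set X, MeasurableSet s →
      unifM r z s = (r : ℝ≥0∞)⁻¹ * ∑ n ∈ Finset.range N, (k n : ℝ≥0∞) * s.indicator 1 (cc n) := by
    intro s hs
    rw [unifM_apply r z hs, hz' (s.indicator 1)]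
  haveI hρ_prob : IsProbabilityMeasure (unifM r z) := unifM_prob hr z
  -- Claim A : LPdist μ ν ≤ δ
  have claimA : levyProkhorovDist μ ν ≤ δ := by
    apply levyProkhorovDist_le_of_forall_le μ ν hδ.le
    intro ε' B hε' hB
    have hε'0 : 0 < ε' := lt_trans hδ hε'
    have hms : ∀ n, MeasurableSet (B ∩ D n) := fun n => hB.inter (hDmeas n)
    have hBsplit : μ B = ∑ n ∈ Finset.range N, μ (B ∩ D n) := by
      rw [← measure_biUnion_finset (fun a _ b _ hab =>
        ((hDdisj hab).mono Set.inter_subset_right Set.inter_subset_right)) (fun n _ => hms n)]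
      congr 1
      rw [← Set.inter_iUnion₂, hDcover, Set.inter_univ]
    rw [hBsplit, hν_apply _ isOpen_thickening.measurableSet]
    refine le_trans (Finset.sum_le_sum fun n hn => ?_) le_self_add
    rcases (B ∩ D n).eq_empty_or_nonempty with hemp | ⟨x, hxB, hxD⟩
    · rw [hemp, measure_empty]; exact zero_le
    · have hnN : n < N := Finset.mem_range.mp hn
      have hccB : cc n ∈ Metric.thickening ε' B := by
        rw [Metric.mem_thickening_iff]
        refine ⟨x, hxB, ?_⟩
        have := hDsub n hnN hxD
        rw [Metric.mem_ball] at this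
        rw [dist_comm]
        exact lt_trans this hε'
      rw [Set.indicator_of_mem hccB, Pi.one_apply, mul_one]
      exact measure_mono Set.inter_subset_right
  -- Claim B : LPdist ν (unifM r z) ≤ δ
  have claimB : levyProkhorovDist ν (unifM r z) ≤ δ := by
    apply levyProkhorovDist_le_of_forall_le ν (unifM r z) hδ.le
    intro ε' B hε' hB
    have hε'0 : 0 < ε' := lt_trans hδ hε'
    have step1 : ν B * r ≤ (∑ n ∈ Finset.range N, (k n : ℝ≥0∞) * B.indicator 1 (cc n))
        + (N : ℝ≥0∞) := by
      rw [hν_apply B hB, Finset.sum_mul]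
      calc ∑ n ∈ Finset.range N, μ (D n) * B.indicator 1 (cc n) * (r:ℝ≥0∞)
          = ∑ n ∈ Finset.range N, (μ (D n) * r) * B.indicator 1 (cc n) := by
            refine Finset.sum_congr rfl fun n _ => ?_; ring
      _ ≤ ∑ n ∈ Finset.range N, ((k n : ℝ≥0∞) + 1) * B.indicator 1 (cc n) :=
            Finset.sum_le_sum fun n _ => mul_le_mul_left (hkey n) _
      _ = (∑ n ∈ Finset.range N, (k n : ℝ≥0∞) * B.indicator 1 (cc n))
            + ∑ n ∈ Finset.range N, B.indicator 1 (cc n) := by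
            rw [← Finset.sum_add_distrib]
            refine Finset.sum_congr rfl fun n _ => ?_; ring
      _ ≤ (∑ n ∈ Finset.range N, (k n : ℝ≥0∞) * B.indicator 1 (cc n)) + (N : ℝ≥0∞) := by
            refine add_le_add_right ?_ _
            calc ∑ n ∈ Finset.range N, B.indicator 1 (cc n)
                ≤ ∑ _n ∈ Finset.range N, 1 :=
                  Finset.sum_le_sum fun n _ => Set.indicator_apply_le (fun _ => le_refl _)
            _ = (N : ℝ≥0∞) := by simp
    have step2 : ν B ≤ unifM r z B + (N : ℝ≥0∞) * (r : ℝ≥0∞)⁻¹ := by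
      have h1 : ν B = (ν B * r) * (r : ℝ≥0∞)⁻¹ := by
        rw [mul_assoc, ENNReal.mul_inv_cancel hrne hrtop, mul_one]
      rw [h1, hρ_apply B hB]
      calc (ν B * r) * (r : ℝ≥0∞)⁻¹
          ≤ ((∑ n ∈ Finset.range N, (k n : ℝ≥0∞) * B.indicator 1 (cc n)) + (N : ℝ≥0∞))
            * (r : ℝ≥0∞)⁻¹ := mul_le_mul_left step1 _
      _ = (r : ℝ≥0∞)⁻¹ * (∑ n ∈ Finset.range N, (k n : ℝ≥0∞) * B.indicator 1 (cc n))
            + (N : ℝ≥0∞) * (r : ℝ≥0∞)⁻¹ := by ring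
    calc ν B ≤ unifM r z B + (N : ℝ≥0∞) * (r : ℝ≥0∞)⁻¹ := step2
    _ ≤ unifM r z (Metric.thickening ε' B) + ENNReal.ofReal ε' := by
        refine add_le_add (measure_mono (Metric.self_subset_thickening hε'0 B)) ?_
        exact le_trans hNr' (ENNReal.ofReal_le_ofReal hε'.le)
  -- conclusion
  refine ⟨r, hr, z, ?_⟩
  have htri : levyProkhorovDist (unifM r z) μ ≤
      levyProkhorovDist (unifM r z) ν + levyProkhorovDist ν μ :=
    levyProkhorovDist_triangle _ _ _
  have h1 : levyProkhorovDist (unifM r z) ν ≤ δ := by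
    rw [levyProkhorovDist_comm]; exact claimB
  have h2 : levyProkhorovDist ν μ ≤ δ := by
    rw [levyProkhorovDist_comm]; exact claimA
  calc levyProkhorovDist (unifM r z) μ ≤ δ + δ := le_trans htri (add_le_add h1 h2)
  _ < ε := by rw [hδdef]; linarith

end Density


section Forward
variable {X : Type*} [MetricSpace X] [CompactSpace X] [MeasurableSpace X] [BorelSpace X]

lemma exists_replicate {a r : ℕ} (ha : 0 < a) (hr : 0 < r) (hdvd : a ∣ r) (z : Fin a → X) :
    ∃ z' : Fin r → X, unifM r z' = unifM a z := by
  obtain ⟨k, rfl⟩ := hdvd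
  have hk : 0 < k := Nat.pos_of_ne_zero (by rintro rfl; simp at hr)
  obtain ⟨z', hz'⟩ := exists_tuple_counts' (a * k) a (fun _ => k) z
    (by rw [Finset.sum_const, Finset.card_univ, Fintype.card_fin, smul_eq_mul])
  refine ⟨z', ?_⟩
  ext s hs
  rw [unifM_apply _ z' hs, unifM_apply a z hs, hz' (s.indicator 1)]
  have : ∑ j : Fin a, (k : ℝ≥0∞) * s.indicator 1 (z j)
      = (k : ℝ≥0∞) * ∑ j : Fin a, s.indicator 1 (z j) := by
    rw [Finset.mul_sum]
  rw [this, ← mul_assoc]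
  congr 1
  rw [Nat.cast_mul, ENNReal.mul_inv (by left; exact_mod_cast ha.ne') (by left; simp),
    mul_assoc, ENNReal.inv_mul_cancel (by exact_mod_cast hk.ne') (by simp), mul_one]

lemma forward_dir (f : ℕ → X → X) (hf : ∀ n, Continuous (f n))
    (hbase : ∀ m' : ℕ, 2 ≤ m' → NAWeaklyMixingOrder f m') (m : ℕ) (hm : 2 ≤ m) :
    NAWeaklyMixingOrder (inducedM f hf) m := by
  intro UU VV hUo hVo hUne hVne
  -- pick centers and radii
  have hU : ∀ i, ∃ μ : ProbabilityMeasure X, ∃ εi : ℝ, 0 < εi ∧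
      ∀ ν : ProbabilityMeasure X, levyProkhorovDist ν.toMeasure μ.toMeasure < εi → ν ∈ UU i := by
    intro i
    obtain ⟨μ, hμ⟩ := hUne i
    obtain ⟨εi, hεi, hball⟩ := exists_LP_ball (hUo i) hμ
    exact ⟨μ, εi, hεi, hball⟩
  have hV : ∀ i, ∃ μ : ProbabilityMeasure X, ∃ εi : ℝ, 0 < εi ∧
      ∀ ν : ProbabilityMeasure X, levyProkhorovDist ν.toMeasure μ.toMeasure < εi → ν ∈ VV i := by
    intro i
    obtain ⟨μ, hμ⟩ := hVne i
    obtain ⟨εi, hεi, hball⟩ := exists_LP_ball (hVo i) hμ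
    exact ⟨μ, εi, hεi, hball⟩
  choose μU εU hεU hballU using hU
  choose μV εV hεV hballV using hV
  -- uniform approximations
  have hdU : ∀ i, ∃ a : ℕ, 0 < a ∧ ∃ z : Fin a → X,
      levyProkhorovDist (unifM a z) (μU i).toMeasure < εU i / 3 :=
    fun i => dense_unif (μU i).toMeasure (div_pos (hεU i) (by norm_num))
  have hdV : ∀ i, ∃ a : ℕ, 0 < a ∧ ∃ z : Fin a → X,
      levyProkhorovDist (unifM a z) (μV i).toMeasure < εV i / 3 :=
    fun i => dense_unif (μV i).toMeasure (div_pos (hεV i) (by norm_num))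
  choose aU haU zU hzU using hdU
  choose aV haV zV hzV using hdV
  -- common denominator
  set r : ℕ := ∏ i, (aU i * aV i) with hrdef
  have hr : 0 < r := Finset.prod_pos fun i _ => mul_pos (haU i) (haV i)
  have hdvd : ∀ i, aU i ∣ r ∧ aV i ∣ r := by
    intro i
    have h1 : (aU i * aV i) ∣ r := Finset.dvd_prod_of_mem _ (Finset.mem_univ i)
    exact ⟨dvd_trans (dvd_mul_right _ _) h1, dvd_trans (dvd_mul_left _ _) h1⟩
  have hrepU : ∀ i, ∃ w : Fin r → X, unifM r w = unifM (aU i) (zU i) :=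
    fun i => exists_replicate (haU i) hr (hdvd i).1 (zU i)
  have hrepV : ∀ i, ∃ w : Fin r → X, unifM r w = unifM (aV i) (zV i) :=
    fun i => exists_replicate (haV i) hr (hdvd i).2 (zV i)
  choose wU hwU using hrepU
  choose wV hwV using hrepV
  -- base weak mixing of order m * r
  set e := finProdFinEquiv (m := m) (n := r) with hedef
  set U' : Fin (m * r) → Set X :=
    fun t => Metric.ball (wU (e.symm t).1 (e.symm t).2) (εU (e.symm t).1 / 3) with hU'def
  set V' : Fin (m * r) → Set X :=
    fun t => Metric.ball (wV (e.symm t).1 (e.symm t).2) (εV (e.symm t).1 / 3) with hV'def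
  have hmr : 2 ≤ m * r := le_trans hm (Nat.le_mul_of_pos_right m hr)
  obtain ⟨n, hn, hmix⟩ := hbase (m * r) hmr U' V'
    (fun t => Metric.isOpen_ball) (fun t => Metric.isOpen_ball)
    (fun t => ⟨_, Metric.mem_ball_self (div_pos (hεU _) (by norm_num))⟩)
    (fun t => ⟨_, Metric.mem_ball_self (div_pos (hεV _) (by norm_num))⟩)
  have hsel : ∀ t : Fin (m * r), ∃ x, x ∈ U' t ∧ iterN f n x ∈ V' t := by
    intro t
    obtain ⟨y, ⟨x, hx, rfl⟩, hy⟩ := hmix t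
    exact ⟨x, hx, hy⟩
  choose x hxU hxV using hsel
  -- atom tuples for each i
  set χ : Fin m → Fin r → X := fun i j => x (e (i, j)) with hχdef
  have hχU : ∀ i j, dist (wU i j) (χ i j) ≤ εU i / 3 := by
    intro i j
    have h1 := hxU (e (i, j))
    rw [hU'def] at h1
    simp only [Equiv.symm_apply_apply] at h1
    rw [Metric.mem_ball] at h1
    rw [dist_comm]
    exact h1.le
  have hχV : ∀ i j, dist (wV i j) (iterN f n (χ i j)) ≤ εV i / 3 := by
    intro i j
    have h1 := hxV (e (i, j))
    rw [hV'def] at h1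
    simp only [Equiv.symm_apply_apply] at h1
    rw [Metric.mem_ball] at h1
    rw [dist_comm]
    exact h1.le
  -- the probability measures
  have hdistU : ∀ i, levyProkhorovDist (unifM r (χ i)) (μU i).toMeasure < εU i := by
    intro i
    haveI := unifM_prob hr (χ i)
    haveI := unifM_prob hr (wU i)
    calc levyProkhorovDist (unifM r (χ i)) (μU i).toMeasure
        ≤ levyProkhorovDist (unifM r (χ i)) (unifM r (wU i))
          + levyProkhorovDist (unifM r (wU i)) (μU i).toMeasure :=
          levyProkhorovDist_triangle _ _ _
    _ < εU i / 3 + εU i / 3 := by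
        apply add_lt_add_of_le_of_lt
        · exact unif_LPdist_le hr (χ i) (wU i) (le_of_lt (div_pos (hεU i) (by norm_num))) (hχU i)
        · rw [hwU i]; exact hzU i
    _ < εU i := by linarith [hεU i]
  have hdistV : ∀ i, levyProkhorovDist (unifM r (iterN f n ∘ χ i)) (μV i).toMeasure < εV i := by
    intro i
    haveI := unifM_prob hr (iterN f n ∘ χ i)
    haveI := unifM_prob hr (wV i)
    calc levyProkhorovDist (unifM r (iterN f n ∘ χ i)) (μV i).toMeasure
        ≤ levyProkhorovDist (unifM r (iterN f n ∘ χ i)) (unifM r (wV i))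
          + levyProkhorovDist (unifM r (wV i)) (μV i).toMeasure :=
          levyProkhorovDist_triangle _ _ _
    _ < εV i / 3 + εV i / 3 := by
        apply add_lt_add_of_le_of_lt
        · exact unif_LPdist_le hr (iterN f n ∘ χ i) (wV i) (le_of_lt (div_pos (hεV i) (by norm_num))) (hχV i)
        · rw [hwV i]; exact hzV i
    _ < εV i := by linarith [hεV i]
  refine ⟨n, hn, fun i => ?_⟩
  set P : ProbabilityMeasure X := ⟨unifM r (χ i), unifM_prob hr (χ i)⟩ with hPdef
  have hPU : P ∈ UU i := hballU i P (hdistU i)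
  have hQmeas : (iterN (inducedM f hf) n P).toMeasure = unifM r (iterN f n ∘ χ i) := by
    rw [iterN_inducedM f hf n P]
    have : P.toMeasure = unifM r (χ i) := rfl
    rw [this, unifM_map r (χ i) (iterN_continuous f hf n).measurable]
  have hQV : iterN (inducedM f hf) n P ∈ VV i := by
    apply hballV i
    rw [hQmeas]
    exact hdistV i
  exact ⟨iterN (inducedM f hf) n P, ⟨P, hPU, rfl⟩, hQV⟩

end Forward

/-- the base system is weakly mixing of all orders iff the induced system
on probability measures is weakly mixing of all orders. -/
theorem weaklyMixing_all_orders_iff_measures {X : Type*} [MetricSpace X] [CompactSpace X]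
    [MeasurableSpace X] [BorelSpace X] (f : ℕ → X → X) (hf : ∀ n, Continuous (f n)) :
    (∀ m : ℕ, 2 ≤ m → NAWeaklyMixingOrder f m) ↔
      (∀ m : ℕ, 2 ≤ m → NAWeaklyMixingOrder (inducedM f hf) m) := by
  constructor
  · intro hbase m hm
    exact forward_dir f hf hbase m hm
  · intro hind m hm
    exact backward_dir f hf m (hind m hm)
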